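/- Let k and n be positive integers, m = kn+1, and T ∈ T_n^k. Then the successor function x ↦ (value reached from x by one move of the walk) is a permutation of {1,2,…,m+n}; that is, every value in {1,…,m+n} has exactly one successor and exactly one predecessor under the walk rules. -/

import Mathlib

open scoped Classical

/-- Number of North steps (letters `true`) among the first `i` letters of `w`. -/
def upCount (w : List Bool) (i : ℕ) : ℕ := (w.take i).count true

/-- Number of East steps (letters `false`) among the first `i` letters of `w`. -/
def rightCount (w : List Bool) (i : ℕ) : ℕ := (w.take i).count false

/-- `w` is an `(m,n)`-Dyck path: a word with `n` North letters (`true`) and `m` East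
letters (`false`), each of whose prefixes with `b` North and `a` East letters
satisfies `b*m - a*n ≥ 0`. -/
def IsDyck (m n : ℕ) (w : List Bool) : Prop :=
  w.length = m + n ∧ w.count true = n ∧
  ∀ i, n * rightCount w i ≤ m * upCount w i

/-- The rank of the `(i+1)`-st step (0-indexed `i`) of `w`, namely `b*m - a*n` where
`b` and `a` are the numbers of North and East letters among the first `i` letters. -/
def rank (m n : ℕ) (w : List Bool) (i : ℕ) : ℤ :=
  (m : ℤ) * upCount w i - (n : ℤ) * rightCount w i

/-- The sweep map: list the steps of `w` in increasing order of their ranks. -/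
def sweep (m n : ℕ) (w : List Bool) : List Bool :=
  (((List.range w.length).mergeSort
      (fun i j => decide (rank m n w i ≤ rank m n w j))).map
    (fun i => w.getD i false))

/-- The word `EN(w)`: list the steps of `w` in increasing order of their end ranks
(the end rank of the `(i+1)`-st step is `rank w (i+1)`). -/
def sweepEN (m n : ℕ) (w : List Bool) : List Bool :=
  (((List.range w.length).mergeSort
      (fun i j => decide (rank m n w (i + 1) ≤ rank m n w (j + 1)))).map
    (fun i => w.getD i false))

/-- One step of the filling algorithm: place entry `p.1` according to letter `p.2`
(`true` = S : start a new column; `false` = W : put it below the smallest active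
entry, an active entry being the current bottom entry of a column of height `< k+1`). -/
def fillStep (k : ℕ) (cols : List (List ℕ)) (p : ℕ × Bool) : List (List ℕ) :=
  if p.2 then cols ++ [[p.1]]
  else
    match ((List.range cols.length).filter
        (fun j => (cols.getD j []).length < k + 1)).argmin
        (fun j => (cols.getD j []).getLastD 0) with
    | none => cols
    | some j => cols.set j ((cols.getD j []) ++ [p.1])

/-- The state (list of columns, each recorded top to bottom) of the filling algorithm
after the entries `1, …, t` have been placed according to the first `t` letters of `w`. -/
def fillColsUpTo (k : ℕ) (w : List Bool) (t : ℕ) : List (List ℕ) :=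
  ((List.range t).map (fun i => (i + 1, w.getD i false))).foldl (fillStep k) []

/-- The final state of the filling algorithm on the word `w` (entries
`1, …, m+n-1` placed, i.e. all letters but the last one processed). -/
def fillCols (k : ℕ) (w : List Bool) : List (List ℕ) :=
  fillColsUpTo k w (w.length - 1)

/-- The tableau `T(D)` produced by the filling algorithm, as a function
(row, column) ↦ entry, rows and columns 0-indexed. -/
def fillTableau (k n : ℕ) (w : List Bool) : Fin (k + 1) → Fin n → ℕ :=
  fun i j => ((fillCols k w).getD j []).getD i 0

/-- `T` fills the `(k+1) × n` array with `1, …, (k+1)n`, increasing along rows and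
columns. -/
def IsFilling (k n : ℕ) (T : Fin (k + 1) → Fin n → ℕ) : Prop :=
  (∀ i j, T i j ∈ Finset.Icc 1 ((k + 1) * n)) ∧
  Function.Injective (fun p : Fin (k + 1) × Fin n => T p.1 p.2) ∧
  (∀ i, StrictMono (T i)) ∧
  (∀ j, StrictMono (fun i => T i j))

/-- For all entries `a < b < c < d` of `T` with `d` directly below `a`, the entries
`b` and `c` do not lie in the same column. -/
def NoBadQuadruple (k n : ℕ) (T : Fin (k + 1) → Fin n → ℕ) : Prop :=
  ∀ (i : Fin (k + 1)) (hi : (i : ℕ) + 1 < k + 1) (j : Fin n)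
    (r r' : Fin (k + 1)) (c : Fin n), r < r' →
      ¬ (T i j < T r c ∧ T r c < T r' c ∧ T r' c < T ⟨(i : ℕ) + 1, hi⟩ j)

/-- The family `𝒯ₙᵏ` of tableaux. -/
def IsFussTableau (k n : ℕ) (T : Fin (k + 1) → Fin n → ℕ) : Prop :=
  IsFilling k n T ∧ NoBadQuadruple k n T

/-- A value `r` is marked for `T` when `r - 1` is a bottom-row entry of `T`. -/
def Marked (k n : ℕ) (T : Fin (k + 1) → Fin n → ℕ) (r : ℕ) : Prop :=
  ∃ j : Fin n, T (Fin.last k) j + 1 = r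

/-- One move of the walk `w(T)` on the values `1, …, M` (where `M = m + n`):
from a row-1 entry `x` move to `r + 1` where `r` is the bottom entry of the column
of `x`; from an entry `x` of one of the rows `2, …, k+1` move to the largest
unmarked value `≤ r`, where `r` is the entry directly above `x`; from `x = M`
move to the largest unmarked value `< M`. -/
noncomputable def walkStep (k n M : ℕ) (T : Fin (k + 1) → Fin n → ℕ) (x : ℕ) : ℕ :=
  if h : ∃ j : Fin n, T 0 j = x then
    T (Fin.last k) (Classical.choose h) + 1
  else if h2 : ∃ p : Fin (k + 1) × Fin n, T p.1 p.2 = x then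
    let p := Classical.choose h2
    ((((Finset.Icc 1 M).filter
        (fun y => y ≤ T (⟨(p.1 : ℕ) - 1, lt_of_le_of_lt (Nat.sub_le _ _) p.1.2⟩ : Fin (k + 1)) p.2
          ∧ ¬ Marked k n T y))).max).getD 0
  else
    ((((Finset.Icc 1 M).filter (fun y => y < M ∧ ¬ Marked k n T y))).max).getD 0

/-- The area of the path `w`: the number of lattice cells of the `m × n` rectangle
lying below the path whose interiors lie entirely above the diagonal.
The cell in column `x` and row `y` (0-indexed) has its interior above the diagonal
iff `n*(x+1) ≤ m*y`, and lies below the path iff the `(y+1)`-st North step of `w`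
occurs before the `(x+1)`-st East step. -/
def nthLetterIdx (w : List Bool) (b : Bool) (j : ℕ) : ℕ :=
  (((List.range w.length).filter (fun i => w.getD i false = b))).getD j 0

def area (m n : ℕ) (w : List Bool) : ℕ :=
  ((Finset.range m ×ˢ Finset.range n).filter
    (fun p => n * (p.1 + 1) ≤ m * p.2 ∧
      nthLetterIdx w true p.2 < nthLetterIdx w false p.1)).card

/-- The reduction `red(T)`: delete column 1 and replace each remaining entry `i` by
`i` minus the number of column-1 entries smaller than `i`. -/
def red (k n : ℕ) (T : Fin (k + 1) → Fin n → ℕ) : Fin (k + 1) → Fin (n - 1) → ℕ :=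
  fun i j =>
    let v := T i ⟨(j : ℕ) + 1, by have := j.2; omega⟩
    v - (Finset.univ.filter
      (fun u : Fin (k + 1) => T u ⟨0, by have := j.2; omega⟩ < v)).card

/-- The (finite) set of `(m,n)`-Dyck paths as a `Finset` of words. -/
noncomputable def dyckFinset (m n : ℕ) : Finset (List Bool) :=
  ((Finset.univ : Finset (Fin (m + n) → Bool)).image List.ofFn).filter
    (fun w => IsDyck m n w)

/-- Auxiliary: the largest unmarked value `≤ r` within `{1, …, M}`. -/
noncomputable def bmax (k n M : ℕ) (T : Fin (k + 1) → Fin n → ℕ) (r : ℕ) : ℕ :=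
  ((((Finset.Icc 1 M).filter (fun y => y ≤ r ∧ ¬ Marked k n T y))).max).getD 0

lemma max_getD_mem {s : Finset ℕ} (h : s.Nonempty) : s.max.getD 0 ∈ s := by
  rw [← Finset.coe_max' h]
  exact s.max'_mem h

lemma le_max_getD {s : Finset ℕ} {a : ℕ} (ha : a ∈ s) : a ≤ s.max.getD 0 := by
  have h : s.Nonempty := ⟨a, ha⟩
  rw [← Finset.coe_max' h]
  exact s.le_max' a ha

lemma bmax_mem (k n M : ℕ) (T : Fin (k + 1) → Fin n → ℕ) (r : ℕ)
    (h1r : 1 ≤ r) (hrM : r ≤ M) (h1 : ¬ Marked k n T 1) :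
    bmax k n M T r ∈ (Finset.Icc 1 M).filter (fun y => y ≤ r ∧ ¬ Marked k n T y) := by
  apply max_getD_mem
  refine ⟨1, ?_⟩
  simp only [Finset.mem_filter, Finset.mem_Icc]
  exact ⟨⟨le_refl 1, by omega⟩, h1r, h1⟩

lemma bmax_lt (k n M : ℕ) (T : Fin (k + 1) → Fin n → ℕ) (r r' : ℕ)
    (h1r : 1 ≤ r) (hrr : r < r') (hM : r' ≤ M)
    (h1 : ¬ Marked k n T 1) (hr1 : ¬ Marked k n T (r + 1)) :
    bmax k n M T r < bmax k n M T r' := by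
  have h2 := bmax_mem k n M T r h1r (le_trans (le_of_lt hrr) hM) h1
  simp only [Finset.mem_filter, Finset.mem_Icc] at h2
  have h3 : r + 1 ≤ bmax k n M T r' := by
    apply le_max_getD
    simp only [Finset.mem_filter, Finset.mem_Icc]
    exact ⟨⟨by omega, by omega⟩, by omega, hr1⟩
  omega

lemma walkStep_row1 (k n M : ℕ) (T : Fin (k + 1) → Fin n → ℕ) (x : ℕ)
    (h : ∃ j : Fin n, T 0 j = x) :
    walkStep k n M T x = T (Fin.last k) (Classical.choose h) + 1 := by
  unfold walkStep; rw [dif_pos h]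

lemma walkStep_mid (k n M : ℕ) (T : Fin (k + 1) → Fin n → ℕ) (x : ℕ)
    (h : ¬ ∃ j : Fin n, T 0 j = x)
    (h2 : ∃ p : Fin (k + 1) × Fin n, T p.1 p.2 = x) :
    walkStep k n M T x =
      bmax k n M T (T ⟨((Classical.choose h2).1 : ℕ) - 1,
        lt_of_le_of_lt (Nat.sub_le _ _) (Classical.choose h2).1.2⟩ (Classical.choose h2).2) := by
  unfold walkStep bmax; rw [dif_neg h, dif_pos h2]

lemma walkStep_top (k n M : ℕ) (T : Fin (k + 1) → Fin n → ℕ) (x : ℕ)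
    (h : ¬ ∃ j : Fin n, T 0 j = x)
    (h2 : ¬ ∃ p : Fin (k + 1) × Fin n, T p.1 p.2 = x) :
    walkStep k n M T x =
      ((((Finset.Icc 1 M).filter (fun y => y < M ∧ ¬ Marked k n T y))).max).getD 0 := by
  unfold walkStep; rw [dif_neg h, dif_neg h2]

/-- For `m = kn+1` and `T ∈ 𝒯ₙᵏ`, the successor function of the
walk is a permutation of `{1, 2, …, m+n}`. -/
theorem statement3 (k n : ℕ) (hk : 0 < k) (hn : 0 < n) (m : ℕ) (hm : m = k * n + 1)
    (T : Fin (k + 1) → Fin n → ℕ) (hT : IsFussTableau k n T) :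
    Set.BijOn (walkStep k n (m + n) T) (Set.Icc 1 (m + n)) (Set.Icc 1 (m + n)) := by
  obtain ⟨⟨hbound, hinj, hrow, hcol⟩, -⟩ := hT
  set M := m + n with hMdef
  set A := (k + 1) * n with hAdef
  have hAM : A + 1 = M := by rw [hAdef, hMdef, hm]; ring
  have hA1 : 1 ≤ A := by
    have : 0 < (k + 1) * n := Nat.mul_pos (Nat.succ_pos k) hn
    omega
  have hb : ∀ i j, 1 ≤ T i j ∧ T i j ≤ A := by
    intro i j
    have := hbound i j
    rw [Finset.mem_Icc] at this
    exact this
  have hinj2 : ∀ (i i' : Fin (k + 1)) (j j' : Fin n), T i j = T i' j' → i = i' ∧ j = j' := by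
    intro i i' j j' h
    have := hinj (a₁ := (i, j)) (a₂ := (i', j')) h
    exact ⟨congrArg Prod.fst this, congrArg Prod.snd this⟩
  have h1un : ¬ Marked k n T 1 := by
    rintro ⟨j, hj⟩
    have := (hb (Fin.last k) j).1
    omega
  -- every value in [1, A] is an entry of T
  have hsurj : ∀ y, 1 ≤ y → y ≤ A → ∃ p : Fin (k + 1) × Fin n, T p.1 p.2 = y := by
    intro y h1 h2
    have hsub : (Finset.univ.image (fun p : Fin (k + 1) × Fin n => T p.1 p.2)) ⊆
        Finset.Icc 1 A := by
      intro z hz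
      rw [Finset.mem_image] at hz
      obtain ⟨p, -, hp⟩ := hz
      rw [Finset.mem_Icc, ← hp]
      exact hb p.1 p.2
    have hcard : (Finset.Icc 1 A).card ≤
        (Finset.univ.image (fun p : Fin (k + 1) × Fin n => T p.1 p.2)).card := by
      rw [Finset.card_image_of_injective _ hinj, Finset.card_univ, Nat.card_Icc]
      simp [hAdef]
    have := Finset.eq_of_subset_of_card_le hsub hcard
    have hy : y ∈ Finset.Icc 1 A := Finset.mem_Icc.mpr ⟨h1, h2⟩
    rw [← this, Finset.mem_image] at hy
    obtain ⟨p, -, hp⟩ := hy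
    exact ⟨p, hp⟩
  -- the branch-3 filter equals the `bmax A` filter
  have hfilt3 : walkStep k n M T = walkStep k n M T ∧
      ((((Finset.Icc 1 M).filter (fun y => y < M ∧ ¬ Marked k n T y))).max).getD 0 =
        bmax k n M T A := by
    refine ⟨rfl, ?_⟩
    unfold bmax
    congr 2
    apply Finset.filter_congr
    intro y hy
    rw [Finset.mem_Icc] at hy
    constructor
    · rintro ⟨h1, h2⟩; exact ⟨by omega, h2⟩
    · rintro ⟨h1, h2⟩; exact ⟨by omega, h2⟩
  -- characterization of non-row-1 values
  have hchar : ∀ x, x ∈ Set.Icc 1 M → (¬ ∃ j : Fin n, T 0 j = x) →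
      ∃ r, walkStep k n M T x = bmax k n M T r ∧ 1 ≤ r ∧ r ≤ A ∧
        ((x = M ∧ r = A) ∨ (r < A ∧ ¬ Marked k n T (r + 1) ∧
          ∃ (i : ℕ) (hi : i < k) (j : Fin n),
            T ⟨i, by omega⟩ j = r ∧ T ⟨i + 1, by omega⟩ j = x)) := by
    intro x hx hnr
    rw [Set.mem_Icc] at hx
    by_cases h2 : ∃ p : Fin (k + 1) × Fin n, T p.1 p.2 = x
    · set p := Classical.choose h2 with hp
      have hps : T p.1 p.2 = x := Classical.choose_spec h2
      have hp1 : 1 ≤ (p.1 : ℕ) := by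
        by_contra hc
        have h0 : p.1 = 0 := by
          apply Fin.ext
          simp only [Fin.val_zero]
          omega
        exact hnr ⟨p.2, by rw [← h0, hps]⟩
      refine ⟨T ⟨(p.1 : ℕ) - 1, lt_of_le_of_lt (Nat.sub_le _ _) p.1.2⟩ p.2,
        walkStep_mid k n M T x hnr h2, (hb _ _).1, le_trans (hb _ _).2 (le_refl A), ?_⟩
      right
      have hik : (p.1 : ℕ) - 1 < k := by
        have := p.1.2
        omega
      have hlt : T ⟨(p.1 : ℕ) - 1, lt_of_le_of_lt (Nat.sub_le _ _) p.1.2⟩ p.2 <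
          T (Fin.last k) p.2 := by
        apply hcol p.2
        rw [Fin.lt_def]
        simp [Fin.last]
        omega
      refine ⟨lt_of_lt_of_le hlt (hb _ _).2, ?_, (p.1 : ℕ) - 1, hik, p.2, rfl, ?_⟩
      · rintro ⟨j', hj'⟩
        have heq : T (Fin.last k) j' =
            T ⟨(p.1 : ℕ) - 1, lt_of_le_of_lt (Nat.sub_le _ _) p.1.2⟩ p.2 := by omega
        have := (hinj2 _ _ _ _ heq).1
        have hval := congrArg Fin.val this
        simp [Fin.last] at hval
        omega
      · have hfin : (⟨(p.1 : ℕ) - 1 + 1, by omega⟩ : Fin (k + 1)) = p.1 := by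
          apply Fin.ext
          simp
          omega
        rw [hfin, hps]
    · have hxM : x = M := by
        by_contra hc
        have : x ≤ A := by omega
        exact h2 (hsurj x hx.1 this)
      refine ⟨A, ?_, hA1, le_refl A, Or.inl ⟨hxM, rfl⟩⟩
      rw [walkStep_top k n M T x hnr h2, hfilt3.2]
  -- comparison of bmax values across the characterization
  have hltkey : ∀ (x r x' r' : ℕ), 1 ≤ r → r ≤ A → r' ≤ A →
      ((x = M ∧ r = A) ∨ (r < A ∧ ¬ Marked k n T (r + 1) ∧
        ∃ (i : ℕ) (hi : i < k) (j : Fin n),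
          T ⟨i, by omega⟩ j = r ∧ T ⟨i + 1, by omega⟩ j = x)) →
      r < r' → bmax k n M T r < bmax k n M T r' := by
    intro x r x' r' h1r hrA hr'A hQ hrr
    rcases hQ with ⟨-, hrA'⟩ | ⟨-, hmk, -⟩
    · omega
    · exact bmax_lt k n M T r r' h1r hrr (by omega) h1un hmk
  have hmaps : Set.MapsTo (walkStep k n M T) (Set.Icc 1 M) (Set.Icc 1 M) := by
    intro x hx
    by_cases h : ∃ j : Fin n, T 0 j = x
    · rw [walkStep_row1 k n M T x h, Set.mem_Icc]
      have := hb (Fin.last k) (Classical.choose h)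
      omega
    · obtain ⟨r, heq, h1r, hrA, -⟩ := hchar x hx h
      rw [heq]
      have := bmax_mem k n M T r h1r (by omega) h1un
      simp only [Finset.mem_filter, Finset.mem_Icc] at this
      rw [Set.mem_Icc]
      exact this.1
  have hinjOn : Set.InjOn (walkStep k n M T) (Set.Icc 1 M) := by
    intro x hx x' hx' hfe
    by_cases h : ∃ j : Fin n, T 0 j = x
    · by_cases h' : ∃ j : Fin n, T 0 j = x'
      · rw [walkStep_row1 k n M T x h, walkStep_row1 k n M T x' h'] at hfe
        have heq : T (Fin.last k) (Classical.choose h) =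
            T (Fin.last k) (Classical.choose h') := by omega
        have := (hinj2 _ _ _ _ heq).2
        rw [← Classical.choose_spec h, ← Classical.choose_spec h', this]
      · obtain ⟨r', heq', h1r', hr'A, -⟩ := hchar x' hx' h'
        rw [walkStep_row1 k n M T x h, heq'] at hfe
        have hmk : Marked k n T (T (Fin.last k) (Classical.choose h) + 1) :=
          ⟨Classical.choose h, rfl⟩
        have := bmax_mem k n M T r' h1r' (by omega) h1un
        simp only [Finset.mem_filter, Finset.mem_Icc] at this
        rw [hfe] at hmk
        exact absurd hmk this.2.2
    · by_cases h' : ∃ j : Fin n, T 0 j = x'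
      · obtain ⟨r, heq, h1r, hrA, -⟩ := hchar x hx h
        rw [walkStep_row1 k n M T x' h', heq] at hfe
        have hmk : Marked k n T (T (Fin.last k) (Classical.choose h') + 1) :=
          ⟨Classical.choose h', rfl⟩
        have := bmax_mem k n M T r h1r (by omega) h1un
        simp only [Finset.mem_filter, Finset.mem_Icc] at this
        rw [← hfe] at hmk
        exact absurd hmk this.2.2
      · obtain ⟨r, heq, h1r, hrA, hQ⟩ := hchar x hx h
        obtain ⟨r', heq', h1r', hr'A, hQ'⟩ := hchar x' hx' h'
        rw [heq, heq'] at hfe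
        have hrr : r = r' := by
          rcases Nat.lt_trichotomy r r' with hlt | he | hgt
          · have := hltkey x r x' r' h1r hrA hr'A hQ hlt
            omega
          · exact he
          · have := hltkey x' r' x r h1r' hr'A hrA hQ' hgt
            omega
        subst hrr
        rcases hQ with ⟨hxM, hrA'⟩ | ⟨hrlt, -, i, hi, j, hTij, hTx⟩
        · rcases hQ' with ⟨hxM', -⟩ | ⟨hrlt', -, -⟩
          · rw [hxM, hxM']
          · omega
        · rcases hQ' with ⟨-, hrA'⟩ | ⟨-, -, i', hi', j', hTij', hTx'⟩
          · omega
          · have heqT : T ⟨i, by omega⟩ j = T ⟨i', by omega⟩ j' := by rw [hTij, hTij']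
            obtain ⟨hii, hjj⟩ := hinj2 _ _ _ _ heqT
            have hval := congrArg Fin.val hii
            simp at hval
            rw [← hTx, ← hTx', hjj]
            congr 1
            exact Fin.ext (by simp [hval])
  exact ((Set.finite_Icc 1 M).injOn_iff_bijOn_of_mapsTo hmaps).mp hinjOn
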